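/- Let B₁ ≤ B₂ and suppose g is monotone (nondecreasing in its first argument and nonincreasing in its second) and continuously differentiable on [B₁,B₂]×[B₁,B₂], and that the CFL condition (Δt/Δx)(sup_{[B₁,B₂]²}|∂₁g| + sup_{[B₁,B₂]²}|∂₂g|) ≤ 1 holds. Then the scheme map H(u_{j−r},…,u_j,…,u_{j+r}) = u_j − Δt Σ_{k=1}^{r∨1} W_k (g(u_j, u_{j+k}) − g(u_{j−k}, u_j)) is monotone on [B₁,B₂]^{2r+1}: if v_i ≤ w_i for every index i, with all v_i, w_i ∈ [B₁,B₂], then H(v) ≤ H(w). -/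

import Mathlib

open MeasureTheory Real Set Filter Topology

noncomputable section

/-- The nonlocal entropy flux `q(a,b;c) = g(a ⊔ c, b ⊔ c) - g(a ⊓ c, b ⊓ c)`. -/
def entFlux (g : ℝ → ℝ → ℝ) (a b c : ℝ) : ℝ :=
  g (max a c) (max b c) - g (min a c) (min b c)

/-- An admissible nonlocal interaction kernel with horizon `δ`. -/
structure AdmissibleKernel (δ : ℝ) (ω : ℝ → ℝ) : Prop where
  nonneg : ∀ h, 0 ≤ ω h
  integrable : Integrable ω
  supp : ∀ h, h ∉ Set.Icc 0 δ → ω h = 0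
  normalized : (∫ h in (0:ℝ)..δ, ω h) = 1

/-- `r = ⌊δ / Δx⌋`. -/
def gridR (δ Δx : ℝ) : ℕ := ⌊δ / Δx⌋₊

/-- `r ∨ 1 = max r 1`. -/
def gridR1 (δ Δx : ℝ) : ℕ := max (gridR δ Δx) 1

/-- The quadrature weights `W_k`. -/
def qWeight (ω : ℝ → ℝ) (δ Δx : ℝ) (k : ℕ) : ℝ :=
  (1 / ((k : ℝ) * Δx)) * (∫ h in (((k : ℝ) - 1) * Δx)..((k : ℝ) * Δx), ω h)
    + (if k = gridR δ Δx then 1 else 0) / ((gridR1 δ Δx : ℝ) * Δx)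
        * (∫ h in ((gridR δ Δx : ℝ) * Δx)..δ, ω h)

/-- One step of the nonlocal scheme `H`. -/
def schemeStep (g : ℝ → ℝ → ℝ) (Δt : ℝ) (W : ℕ → ℝ) (R : ℕ) (v : ℤ → ℝ) (j : ℤ) : ℝ :=
  v j - Δt * ∑ k ∈ Finset.Icc 1 R,
    W k * (g (v j) (v (j + (k : ℤ))) - g (v (j - (k : ℤ))) (v j))

/-- Iterates of the nonlocal scheme. -/
def schemeSol (g : ℝ → ℝ → ℝ) (Δt : ℝ) (W : ℕ → ℝ) (R : ℕ) (v0 : ℤ → ℝ) : ℕ → ℤ → ℝ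
  | 0 => v0
  | n + 1 => schemeStep g Δt W R (schemeSol g Δt W R v0 n)

/-- Cell averages of the initial data. -/
def cellAvg (u₀ : ℝ → ℝ) (Δx : ℝ) (j : ℤ) : ℝ :=
  (1 / Δx) * ∫ x in (((j : ℝ) - 1/2) * Δx)..(((j : ℝ) + 1/2) * Δx), u₀ x

/-- The numerical solution of the nonlocal scheme with initial data `u₀`. -/
def numSol (g : ℝ → ℝ → ℝ) (ω : ℝ → ℝ) (δ Δx Δt : ℝ) (u₀ : ℝ → ℝ) : ℕ → ℤ → ℝ :=
  schemeSol g Δt (qWeight ω δ Δx) (gridR1 δ Δx) (cellAvg u₀ Δx)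

/-- Piecewise constant interpolant of a grid function. -/
def pcInterp (Δx Δt : ℝ) (v : ℕ → ℤ → ℝ) (x t : ℝ) : ℝ :=
  v ⌊t / Δt⌋₊ ⌊x / Δx + 1/2⌋

/-- The piecewise-constant numerical solution `u^{Δ,δ}`. -/
def numInterp (g : ℝ → ℝ → ℝ) (ω : ℝ → ℝ) (δ Δx Δt : ℝ) (u₀ : ℝ → ℝ) (x t : ℝ) : ℝ :=
  pcInterp Δx Δt (numSol g ω δ Δx Δt u₀) x t

/-- `h^Δ(h) = kΔx` for `h ∈ [(k-1)Δx, kΔx)`. -/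
def hDelta (Δx h : ℝ) : ℝ := ((⌊h / Δx⌋ : ℝ) + 1) * Δx

/-- Interpolant of the test function: affine in `x` on each grid cell, piecewise
constant in `t`. -/
def phiDelta (φ : ℝ → ℝ → ℝ) (Δx Δt : ℝ) (x t : ℝ) : ℝ :=
  φ (((⌊x / Δx + 1/2⌋ : ℝ) - 1/2) * Δx) ((⌊t / Δt⌋₊ : ℝ) * Δt)
    + ((x - ((⌊x / Δx + 1/2⌋ : ℝ) - 1/2) * Δx) / Δx)
      * (φ (((⌊x / Δx + 1/2⌋ : ℝ) + 1/2) * Δx) ((⌊t / Δt⌋₊ : ℝ) * Δt)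
          - φ (((⌊x / Δx + 1/2⌋ : ℝ) - 1/2) * Δx) ((⌊t / Δt⌋₊ : ℝ) * Δt))

/-- The `2r`-point numerical flux `𝕘`. -/
def bigFlux (g : ℝ → ℝ → ℝ) (W : ℕ → ℝ) (Δx : ℝ) (R : ℕ) (v : ℤ → ℝ) (j : ℤ) : ℝ :=
  ∑ k ∈ Finset.Icc 1 R, ∑ l ∈ Finset.Icc 1 k,
    g (v (j - (l : ℤ))) (v (j - (l : ℤ) + (k : ℤ))) * W k * Δx

/-- Supremum of `|∂₁ g|` over `[B₁,B₂] × [B₁,B₂]`. -/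
def supAbsDeriv1 (g : ℝ → ℝ → ℝ) (B₁ B₂ : ℝ) : ℝ :=
  sSup ((fun p : ℝ × ℝ => |derivWithin (fun a => g a p.2) (Set.Icc B₁ B₂) p.1|) ''
    (Set.Icc B₁ B₂ ×ˢ Set.Icc B₁ B₂))

/-- Supremum of `|∂₂ g|` over `[B₁,B₂] × [B₁,B₂]`. -/
def supAbsDeriv2 (g : ℝ → ℝ → ℝ) (B₁ B₂ : ℝ) : ℝ :=
  sSup ((fun p : ℝ × ℝ => |derivWithin (fun b => g p.1 b) (Set.Icc B₁ B₂) p.2|) ''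
    (Set.Icc B₁ B₂ ×ˢ Set.Icc B₁ B₂))

/-- Entropy solution of the nonlocal conservation law on `ℝ × [0,T]`. -/
structure IsEntropySolNonlocal (T δ : ℝ) (ω : ℝ → ℝ) (g : ℝ → ℝ → ℝ)
    (u₀ : ℝ → ℝ) (u : ℝ → ℝ → ℝ) : Prop where
  bounded : ∃ M, ∀ x t, |u x t| ≤ M
  integrable : ∀ t ∈ Set.Icc (0:ℝ) T, Integrable (fun x => u x t)
  contL1 : ∀ t₀ ∈ Set.Icc (0:ℝ) T,
    Tendsto (fun t => ∫ x : ℝ, |u x t - u x t₀|) (nhdsWithin t₀ (Set.Icc 0 T)) (nhds 0)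
  init : ∀ x, u x 0 = u₀ x
  entropy : ∀ φ : ℝ → ℝ → ℝ, ContDiff ℝ 1 (fun p : ℝ × ℝ => φ p.1 p.2) →
    HasCompactSupport (fun p : ℝ × ℝ => φ p.1 p.2) → (∀ x t, 0 ≤ φ x t) → ∀ c : ℝ,
    0 ≤ (∫ t in (0:ℝ)..T, ∫ x : ℝ, |u x t - c| * deriv (fun s => φ x s) t)
      + ∫ t in (0:ℝ)..T, ∫ x : ℝ, ∫ h in (0:ℝ)..δ,
          ((φ (x + h) t - φ x t) / h) * entFlux g (u x t) (u (x + h) t) c * ω h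

/-- Kruzhkov entropy solution of the local conservation law `u_t + f(u)_x = 0`. -/
structure IsEntropySolLocal (T : ℝ) (f : ℝ → ℝ) (u₀ : ℝ → ℝ) (u : ℝ → ℝ → ℝ) : Prop where
  bounded : ∃ M, ∀ x t, |u x t| ≤ M
  integrable : ∀ t ∈ Set.Icc (0:ℝ) T, Integrable (fun x => u x t)
  contL1 : ∀ t₀ ∈ Set.Icc (0:ℝ) T,
    Tendsto (fun t => ∫ x : ℝ, |u x t - u x t₀|) (nhdsWithin t₀ (Set.Icc 0 T)) (nhds 0)
  init : ∀ x, u x 0 = u₀ x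
  entropy : ∀ φ : ℝ → ℝ → ℝ, ContDiff ℝ 1 (fun p : ℝ × ℝ => φ p.1 p.2) →
    HasCompactSupport (fun p : ℝ × ℝ => φ p.1 p.2) → (∀ x t, 0 ≤ φ x t) → ∀ c : ℝ,
    0 ≤ ∫ t in (0:ℝ)..T, ∫ x : ℝ,
        (|u x t - c| * deriv (fun s => φ x s) t
          + Real.sign (u x t - c) * (f (u x t) - f c) * deriv (fun y => φ y t) x)


lemma gridR_mul_le {δ Δx : ℝ} (hδ : 0 < δ) (hΔx : 0 < Δx) : (gridR δ Δx : ℝ) * Δx ≤ δ := by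
  have h : (gridR δ Δx : ℝ) ≤ δ / Δx := Nat.floor_le (by positivity)
  have := mul_le_mul_of_nonneg_right h hΔx.le
  rwa [div_mul_cancel₀ _ hΔx.ne'] at this

lemma qWeight_nonneg {δ Δx : ℝ} {ω : ℝ → ℝ} (hδ : 0 < δ) (hΔx : 0 < Δx)
    (hω : AdmissibleKernel δ ω) (k : ℕ) : 0 ≤ qWeight ω δ Δx k := by
  unfold qWeight
  have h1 : (0:ℝ) ≤ (1 / ((k : ℝ) * Δx)) * ∫ h in (((k : ℝ) - 1) * Δx)..((k : ℝ) * Δx), ω h := by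
    apply mul_nonneg (by positivity)
    apply intervalIntegral.integral_nonneg
    · nlinarith [Nat.cast_nonneg (α := ℝ) k]
    · intro x _; exact hω.nonneg x
  have h2 : (0:ℝ) ≤ (if k = gridR δ Δx then (1:ℝ) else 0) / ((gridR1 δ Δx : ℝ) * Δx)
      * ∫ h in ((gridR δ Δx : ℝ) * Δx)..δ, ω h := by
    apply mul_nonneg
    · apply div_nonneg ?_ (by positivity)
      split_ifs <;> norm_num
    · exact intervalIntegral.integral_nonneg (gridR_mul_le hδ hΔx) (fun x _ => hω.nonneg x)
  linarith

lemma sum_qWeight_mul_le {δ Δx : ℝ} {ω : ℝ → ℝ} (hδ : 0 < δ) (hΔx : 0 < Δx)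
    (hω : AdmissibleKernel δ ω) :
    Δx * ∑ k ∈ Finset.Icc 1 (gridR1 δ Δx), (k : ℝ) * qWeight ω δ Δx k ≤ 1 := by
  set r := gridR δ Δx with hr
  set R := gridR1 δ Δx with hR
  have hRr : r ≤ R := le_max_left _ _
  have hR1 : 1 ≤ R := le_max_right _ _
  set J : ℝ := ∫ h in ((r : ℝ) * Δx)..δ, ω h with hJ
  have hint : ∀ a b : ℝ, IntervalIntegrable ω volume a b := fun a b =>
    hω.integrable.intervalIntegrable
  have hterm : ∀ k ∈ Finset.Icc 1 R, Δx * ((k:ℝ) * qWeight ω δ Δx k)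
      = (∫ h in (((k : ℝ) - 1) * Δx)..((k : ℝ) * Δx), ω h)
        + (if k = r then 1 else 0) * J := by
    intro k hk
    rw [Finset.mem_Icc] at hk
    have hk1 : (1:ℝ) ≤ (k:ℝ) := by exact_mod_cast hk.1
    have hkne : (k:ℝ) ≠ 0 := by positivity
    unfold qWeight
    rw [← hr, ← hR, ← hJ]
    by_cases hkr : k = r
    · have hRk : R = k := by
        rw [hkr, hR]; unfold gridR1; rw [← hr]; omega
      rw [if_pos hkr, hRk]
      field_simp
    · have hRne : ((R:ℕ):ℝ) ≠ 0 := by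
        have : (1:ℝ) ≤ (R:ℝ) := by exact_mod_cast hR1
        linarith
      rw [if_neg hkr]
      field_simp
      ring
  rw [Finset.mul_sum, Finset.sum_congr rfl hterm, Finset.sum_add_distrib]
  have htel : ∑ k ∈ Finset.Icc 1 R, (∫ h in (((k : ℝ) - 1) * Δx)..((k : ℝ) * Δx), ω h)
      = ∫ h in (0:ℝ)..((R:ℝ) * Δx), ω h := by
    have key : ∑ k ∈ Finset.range R, ∫ x in ((k:ℝ)*Δx)..(((k:ℝ)+1)*Δx), ω x
        = ∫ x in (0:ℝ)..((R:ℝ)*Δx), ω x := by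
      have key := intervalIntegral.sum_integral_adjacent_intervals
        (a := fun i : ℕ => (i : ℝ) * Δx) (f := ω) (μ := volume) (n := R)
        (fun i _ => hint _ _)
      simpa using key
    rw [← Finset.Ico_add_one_right_eq_Icc, Finset.sum_Ico_eq_sum_range]
    try simp only [Nat.add_sub_cancel]
    rw [← key]
    apply Finset.sum_congr rfl
    intro i _
    congr 1 <;> push_cast <;> ring
  rw [htel]
  have hite : ∑ k ∈ Finset.Icc 1 R, (if k = r then (1:ℝ) else 0) * J
      = if r ∈ Finset.Icc 1 R then J else 0 := by
    simp only [ite_mul, one_mul, zero_mul]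
    exact Finset.sum_ite_eq' _ _ _
  rw [hite]
  by_cases hr1 : 1 ≤ r
  · have hRr' : R = r := by rw [hR]; unfold gridR1; omega
    rw [if_pos (Finset.mem_Icc.mpr ⟨hr1, hRr⟩), hRr', hJ]
    rw [intervalIntegral.integral_add_adjacent_intervals (hint _ _) (hint _ _)]
    rw [hω.normalized]
  · have hr0 : r = 0 := by omega
    have hR' : R = 1 := by rw [hR]; unfold gridR1; omega
    rw [if_neg (by simp [hr0])]
    have hδΔx : δ ≤ Δx := by
      by_contra hcon
      push_neg at hcon
      have : 1 ≤ δ / Δx := (one_le_div hΔx).mpr hcon.le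
      have : 1 ≤ r := by
        rw [hr]; unfold gridR
        exact Nat.le_floor (by push_cast; linarith)
      omega
    have hsplit : (∫ h in (0:ℝ)..((R:ℝ)*Δx), ω h)
        = (∫ h in (0:ℝ)..δ, ω h) + ∫ h in δ..((R:ℝ)*Δx), ω h :=
      (intervalIntegral.integral_add_adjacent_intervals (hint _ _) (hint _ _)).symm
    have hzero : (∫ h in δ..((R:ℝ)*Δx), ω h) = 0 := by
      rw [intervalIntegral.integral_of_le (by rw [hR']; push_cast; linarith)]
      apply setIntegral_eq_zero_of_forall_eq_zero
      intro x hx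
      exact hω.supp x (fun hmem => absurd hx.1 (not_lt.mpr hmem.2))
    rw [hsplit, hzero, hω.normalized]
    norm_num

lemma lipschitz_aux (B₁ B₂ : ℝ) (hB : B₁ < B₂) (g : ℝ → ℝ → ℝ)
    (hgC1 : ContDiffOn ℝ 1 (fun p : ℝ × ℝ => g p.1 p.2) (Set.Icc B₁ B₂ ×ˢ Set.Icc B₁ B₂)) :
    (∀ b ∈ Set.Icc B₁ B₂, ∀ x ∈ Set.Icc B₁ B₂, ∀ y ∈ Set.Icc B₁ B₂,
      |g y b - g x b| ≤ supAbsDeriv1 g B₁ B₂ * |y - x|) ∧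
    (∀ a ∈ Set.Icc B₁ B₂, ∀ x ∈ Set.Icc B₁ B₂, ∀ y ∈ Set.Icc B₁ B₂,
      |g a y - g a x| ≤ supAbsDeriv2 g B₁ B₂ * |y - x|) := by
  set s := Set.Icc B₁ B₂ with hs
  set S := s ×ˢ s with hSdef
  set G := fun p : ℝ × ℝ => g p.1 p.2 with hG
  have hu : UniqueDiffOn ℝ s := uniqueDiffOn_Icc hB
  have hS : UniqueDiffOn ℝ S := hu.prod hu
  have hdiff : DifferentiableOn ℝ G S := hgC1.differentiableOn one_ne_zero
  have hfc : ContinuousOn (fderivWithin ℝ G S) S := hgC1.continuousOn_fderivWithin hS le_rfl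
  have hcomp : IsCompact S := (isCompact_Icc.prod isCompact_Icc)
  -- first variable
  have key1 : ∀ a ∈ s, ∀ b ∈ s,
      HasDerivWithinAt (fun a' => g a' b) ((fderivWithin ℝ G S (a, b)) (1, 0)) s a := by
    intro a ha b hb
    have hGd : HasFDerivWithinAt G (fderivWithin ℝ G S (a, b)) S (a, b) :=
      (hdiff (a, b) ⟨ha, hb⟩).hasFDerivWithinAt
    have hι : HasDerivWithinAt (fun a' : ℝ => (a', b)) ((1 : ℝ), (0 : ℝ)) s a :=
      (HasDerivAt.prodMk (hasDerivAt_id a) (hasDerivAt_const a b)).hasDerivWithinAt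
    exact hGd.comp_hasDerivWithinAt a hι (fun x hx => (⟨hx, hb⟩ : (x, b) ∈ S))
  have key2 : ∀ a ∈ s, ∀ b ∈ s,
      HasDerivWithinAt (fun b' => g a b') ((fderivWithin ℝ G S (a, b)) (0, 1)) s b := by
    intro a ha b hb
    have hGd : HasFDerivWithinAt G (fderivWithin ℝ G S (a, b)) S (a, b) :=
      (hdiff (a, b) ⟨ha, hb⟩).hasFDerivWithinAt
    have hι : HasDerivWithinAt (fun b' : ℝ => (a, b')) ((0 : ℝ), (1 : ℝ)) s b :=
      (HasDerivAt.prodMk (hasDerivAt_const b a) (hasDerivAt_id b)).hasDerivWithinAt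
    exact hGd.comp_hasDerivWithinAt b hι (fun x hx => ⟨ha, hx⟩)
  have hd1 : ∀ a ∈ s, ∀ b ∈ s,
      derivWithin (fun a' => g a' b) s a = (fderivWithin ℝ G S (a, b)) (1, 0) :=
    fun a ha b hb => (key1 a ha b hb).derivWithin (hu a ha)
  have hd2 : ∀ a ∈ s, ∀ b ∈ s,
      derivWithin (fun b' => g a b') s b = (fderivWithin ℝ G S (a, b)) (0, 1) :=
    fun a ha b hb => (key2 a ha b hb).derivWithin (hu b hb)
  have hbdd1 : BddAbove ((fun p : ℝ × ℝ => |derivWithin (fun a => g a p.2) s p.1|) '' S) := by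
    have himg : ((fun p : ℝ × ℝ => |derivWithin (fun a => g a p.2) s p.1|) '' S)
        = ((fun p : ℝ × ℝ => |(fderivWithin ℝ G S p) (1, 0)|) '' S) :=
      Set.image_congr (fun p hp => by rw [hd1 p.1 hp.1 p.2 hp.2])
    rw [himg]
    exact hcomp.bddAbove_image ((hfc.clm_apply continuousOn_const).abs)
  have hbdd2 : BddAbove ((fun p : ℝ × ℝ => |derivWithin (fun b => g p.1 b) s p.2|) '' S) := by
    have himg : ((fun p : ℝ × ℝ => |derivWithin (fun b => g p.1 b) s p.2|) '' S)
        = ((fun p : ℝ × ℝ => |(fderivWithin ℝ G S p) (0, 1)|) '' S) :=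
      Set.image_congr (fun p hp => by rw [hd2 p.1 hp.1 p.2 hp.2])
    rw [himg]
    exact hcomp.bddAbove_image ((hfc.clm_apply continuousOn_const).abs)
  constructor
  · intro b hb x hx y hy
    have := Convex.norm_image_sub_le_of_norm_derivWithin_le
      (f := fun a' => g a' b) (s := s) (C := supAbsDeriv1 g B₁ B₂)
      (fun a ha => (key1 a ha b hb).differentiableWithinAt)
      (fun a ha => by
        rw [Real.norm_eq_abs]
        exact le_csSup hbdd1 ⟨(a, b), ⟨ha, hb⟩, rfl⟩)
      (convex_Icc B₁ B₂) hx hy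
    simpa [Real.norm_eq_abs] using this
  · intro a ha x hx y hy
    have := Convex.norm_image_sub_le_of_norm_derivWithin_le
      (f := fun b' => g a b') (s := s) (C := supAbsDeriv2 g B₁ B₂)
      (fun b hb => (key2 a ha b hb).differentiableWithinAt)
      (fun b hb => by
        rw [Real.norm_eq_abs]
        exact le_csSup hbdd2 ⟨(a, b), ⟨ha, hb⟩, rfl⟩)
      (convex_Icc B₁ B₂) hx hy
    simpa [Real.norm_eq_abs] using this

lemma sum_qWeight_le {δ Δx : ℝ} {ω : ℝ → ℝ} (hδ : 0 < δ) (hΔx : 0 < Δx)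
    (hω : AdmissibleKernel δ ω) :
    ∑ k ∈ Finset.Icc 1 (gridR1 δ Δx), qWeight ω δ Δx k ≤ 1 / Δx := by
  have h1 : ∑ k ∈ Finset.Icc 1 (gridR1 δ Δx), qWeight ω δ Δx k
      ≤ ∑ k ∈ Finset.Icc 1 (gridR1 δ Δx), (k : ℝ) * qWeight ω δ Δx k := by
    apply Finset.sum_le_sum
    intro k hk
    rw [Finset.mem_Icc] at hk
    have hk1 : (1:ℝ) ≤ (k:ℝ) := by exact_mod_cast hk.1
    nlinarith [qWeight_nonneg hδ hΔx hω k]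
  have h2 := sum_qWeight_mul_le hδ hΔx hω
  rw [le_div_iff₀ hΔx]
  nlinarith


/-- monotonicity of the scheme map `H` under the CFL condition. -/
theorem schemeStep_monotone
    (δ Δx Δt B₁ B₂ : ℝ) (hδ : 0 < δ) (hΔx : 0 < Δx) (hΔt : 0 < Δt) (hB : B₁ ≤ B₂)
    (ω : ℝ → ℝ) (hω : AdmissibleKernel δ ω)
    (g : ℝ → ℝ → ℝ)
    (hg1 : ∀ a a' b, a ∈ Set.Icc B₁ B₂ → a' ∈ Set.Icc B₁ B₂ → b ∈ Set.Icc B₁ B₂ →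
      a ≤ a' → g a b ≤ g a' b)
    (hg2 : ∀ a b b', a ∈ Set.Icc B₁ B₂ → b ∈ Set.Icc B₁ B₂ → b' ∈ Set.Icc B₁ B₂ →
      b ≤ b' → g a b' ≤ g a b)
    (hgC1 : ContDiffOn ℝ 1 (fun p : ℝ × ℝ => g p.1 p.2) (Set.Icc B₁ B₂ ×ˢ Set.Icc B₁ B₂))
    (hCFL : Δt / Δx * (supAbsDeriv1 g B₁ B₂ + supAbsDeriv2 g B₁ B₂) ≤ 1)
    (v w : ℤ → ℝ)
    (hv : ∀ i, v i ∈ Set.Icc B₁ B₂) (hw : ∀ i, w i ∈ Set.Icc B₁ B₂)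
    (hvw : ∀ i, v i ≤ w i) :
    ∀ j, schemeStep g Δt (qWeight ω δ Δx) (gridR1 δ Δx) v j
      ≤ schemeStep g Δt (qWeight ω δ Δx) (gridR1 δ Δx) w j := by
  intro j
  rcases eq_or_lt_of_le hB with hBeq | hBlt
  · have hvw' : v = w := by
      funext i
      have h1 := hv i; have h2 := hw i
      rw [← hBeq, Set.Icc_self, Set.mem_singleton_iff] at h1 h2
      rw [h1, h2]
    rw [hvw']
  · obtain ⟨lip1, lip2⟩ := lipschitz_aux B₁ B₂ hBlt g hgC1
    set L₁ := supAbsDeriv1 g B₁ B₂ with hL₁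
    set L₂ := supAbsDeriv2 g B₁ B₂ with hL₂
    have hL1 : 0 ≤ L₁ := by
      have := lip1 B₁ (Set.left_mem_Icc.mpr hB) B₁ (Set.left_mem_Icc.mpr hB)
        B₂ (Set.right_mem_Icc.mpr hB)
      have habs : |B₂ - B₁| = B₂ - B₁ := abs_of_nonneg (by linarith)
      rw [habs] at this
      nlinarith [abs_nonneg (g B₂ B₁ - g B₁ B₁)]
    have hL2 : 0 ≤ L₂ := by
      have := lip2 B₁ (Set.left_mem_Icc.mpr hB) B₁ (Set.left_mem_Icc.mpr hB)
        B₂ (Set.right_mem_Icc.mpr hB)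
      have habs : |B₂ - B₁| = B₂ - B₁ := abs_of_nonneg (by linarith)
      rw [habs] at this
      nlinarith [abs_nonneg (g B₁ B₂ - g B₁ B₁)]
    set R := gridR1 δ Δx with hR
    set W := qWeight ω δ Δx with hW
    have hWpos : ∀ k, 0 ≤ W k := fun k => qWeight_nonneg hδ hΔx hω k
    have hWsum : ∑ k ∈ Finset.Icc 1 R, W k ≤ 1 / Δx := sum_qWeight_le hδ hΔx hω
    set d := w j - v j with hd
    have hd0 : 0 ≤ d := by rw [hd]; linarith [hvw j]
    have hterm : ∀ k ∈ Finset.Icc 1 R,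
        W k * (g (w j) (w (j + (k : ℤ))) - g (w (j - (k : ℤ))) (w j))
          - W k * (g (v j) (v (j + (k : ℤ))) - g (v (j - (k : ℤ))) (v j))
        ≤ W k * ((L₁ + L₂) * d) := by
      intro k _
      have h1 : g (v j) (w (j + (k : ℤ))) ≤ g (v j) (v (j + (k : ℤ))) :=
        hg2 _ _ _ (hv j) (hv _) (hw _) (hvw _)
      have h2 : g (w j) (w (j + (k : ℤ))) - g (v j) (w (j + (k : ℤ))) ≤ L₁ * d := by
        have := lip1 (w (j + (k : ℤ))) (hw _) (v j) (hv j) (w j) (hw j)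
        rw [show w j - v j = d from rfl, abs_of_nonneg hd0] at this
        calc g (w j) (w (j + (k : ℤ))) - g (v j) (w (j + (k : ℤ)))
            ≤ |g (w j) (w (j + (k : ℤ))) - g (v j) (w (j + (k : ℤ)))| := le_abs_self _
          _ ≤ L₁ * d := this
      have h3 : g (v (j - (k : ℤ))) (v j) ≤ g (w (j - (k : ℤ))) (v j) :=
        hg1 _ _ _ (hv _) (hw _) (hv j) (hvw _)
      have h4 : g (w (j - (k : ℤ))) (v j) - g (w (j - (k : ℤ))) (w j) ≤ L₂ * d := by
        have := lip2 (w (j - (k : ℤ))) (hw _) (w j) (hw j) (v j) (hv j)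
        rw [show |v j - w j| = d by rw [abs_sub_comm]; exact abs_of_nonneg hd0] at this
        calc g (w (j - (k : ℤ))) (v j) - g (w (j - (k : ℤ))) (w j)
            ≤ |g (w (j - (k : ℤ))) (v j) - g (w (j - (k : ℤ))) (w j)| := le_abs_self _
          _ ≤ L₂ * d := this
      have hX : (g (w j) (w (j + (k : ℤ))) - g (w (j - (k : ℤ))) (w j))
          - (g (v j) (v (j + (k : ℤ))) - g (v (j - (k : ℤ))) (v j)) ≤ (L₁ + L₂) * d := by
        nlinarith
      calc W k * (g (w j) (w (j + (k : ℤ))) - g (w (j - (k : ℤ))) (w j))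
            - W k * (g (v j) (v (j + (k : ℤ))) - g (v (j - (k : ℤ))) (v j))
          = W k * ((g (w j) (w (j + (k : ℤ))) - g (w (j - (k : ℤ))) (w j))
              - (g (v j) (v (j + (k : ℤ))) - g (v (j - (k : ℤ))) (v j))) := by ring
        _ ≤ W k * ((L₁ + L₂) * d) := mul_le_mul_of_nonneg_left hX (hWpos k)
    set Sv := ∑ k ∈ Finset.Icc 1 R,
      W k * (g (v j) (v (j + (k : ℤ))) - g (v (j - (k : ℤ))) (v j)) with hSv
    set Sw := ∑ k ∈ Finset.Icc 1 R,
      W k * (g (w j) (w (j + (k : ℤ))) - g (w (j - (k : ℤ))) (w j)) with hSw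
    have hsum : Sw - Sv ≤ (L₁ + L₂) * d * (1 / Δx) := by
      have e1 : Sw - Sv = ∑ k ∈ Finset.Icc 1 R,
          (W k * (g (w j) (w (j + (k : ℤ))) - g (w (j - (k : ℤ))) (w j))
            - W k * (g (v j) (v (j + (k : ℤ))) - g (v (j - (k : ℤ))) (v j))) := by
        rw [hSw, hSv, Finset.sum_sub_distrib]
      rw [e1]
      calc ∑ k ∈ Finset.Icc 1 R,
          (W k * (g (w j) (w (j + (k : ℤ))) - g (w (j - (k : ℤ))) (w j))
            - W k * (g (v j) (v (j + (k : ℤ))) - g (v (j - (k : ℤ))) (v j)))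
          ≤ ∑ k ∈ Finset.Icc 1 R, W k * ((L₁ + L₂) * d) := Finset.sum_le_sum hterm
        _ = (L₁ + L₂) * d * ∑ k ∈ Finset.Icc 1 R, W k := by
            rw [← Finset.sum_mul]; ring
        _ ≤ (L₁ + L₂) * d * (1 / Δx) :=
            mul_le_mul_of_nonneg_left hWsum (by positivity)
    have hstep : Δt * (Sw - Sv) ≤ d := by
      have h5 : Δt * (Sw - Sv) ≤ Δt * ((L₁ + L₂) * d * (1 / Δx)) :=
        mul_le_mul_of_nonneg_left hsum hΔt.le
      have h6 : d * (Δt / Δx * (L₁ + L₂)) ≤ d * 1 := mul_le_mul_of_nonneg_left hCFL hd0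
      have h7 : Δt * ((L₁ + L₂) * d * (1 / Δx)) = d * (Δt / Δx * (L₁ + L₂)) := by ring
      linarith
    show v j - Δt * Sv ≤ w j - Δt * Sw
    have : Δt * Sw - Δt * Sv = Δt * (Sw - Sv) := by ring
    linarith
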